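/- Let d ≥ 2, gcd(l,d) = 1, and let h : ℤ → ℤ with h(n) = (l·n + l_b)/d for n ≡ b (mod d), l_b ≡ -l·b (mod d). Define N*(x) = #{n ∈ ℤ : |n| ≤ x, h^(k)(n) ≢ 0 (mod d) for all 1 ≤ k ≤ log_d x}. Then N*(x) ≤ 4d·x^{β_d} for all x ≥ 1, where β_d = log(d-1)/log d. -/

import Mathlib

open Real

section Aux

variable {d : ℕ} {l : ℤ} {L : ℤ → ℤ} {h : ℤ → ℤ}

private lemma dvd_iff_of_dvd_sub {c a b : ℤ} (hab : c ∣ a - b) : (c ∣ a ↔ c ∣ b) := by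
  constructor
  · intro ha
    have := dvd_sub ha hab
    simpa using this
  · intro hb
    have := dvd_add hab hb
    simpa using this

private lemma lin_key (hh : ∀ n : ℤ, (d : ℤ) * h n = l * n + L (n % d))
    {m n : ℤ} (hmod : m % (d : ℤ) = n % (d : ℤ)) :
    (d : ℤ) * (h m - h n) = l * (m - n) := by
  have h1 := hh m
  have h2 := hh n
  rw [hmod] at h1
  linear_combination h1 - h2

private lemma step_dvd (hd : 2 ≤ d) (hh : ∀ n : ℤ, (d : ℤ) * h n = l * n + L (n % d))
    {m n : ℤ} {k : ℕ} (hmn : (d : ℤ) ^ (k + 1) ∣ m - n) :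
    (d : ℤ) ^ k ∣ h m - h n := by
  have hd0 : (d : ℤ) ≠ 0 := by exact_mod_cast (by omega : d ≠ 0)
  have hddvd : (d : ℤ) ∣ m - n := (dvd_pow_self (d : ℤ) (Nat.succ_ne_zero k)).trans hmn
  have hmod : m % (d : ℤ) = n % (d : ℤ) :=
    Int.emod_eq_emod_iff_emod_sub_eq_zero.mpr (Int.emod_eq_zero_of_dvd hddvd)
  have hlin := lin_key hh hmod
  have h1 : (d : ℤ) ^ (k + 1) ∣ (d : ℤ) * (h m - h n) := by
    rw [hlin]; exact hmn.mul_left l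
  rw [pow_succ'] at h1
  exact (mul_dvd_mul_iff_left hd0).mp h1

private lemma iter_dvd (hd : 2 ≤ d) (hh : ∀ n : ℤ, (d : ℤ) * h n = l * n + L (n % d)) :
    ∀ (j : ℕ) (m n : ℤ) (k : ℕ), (d : ℤ) ^ (j + k) ∣ m - n →
      (d : ℤ) ^ k ∣ h^[j] m - h^[j] n := by
  intro j
  induction j with
  | zero => intro m n k hk; simpa using hk
  | succ j ih =>
    intro m n k hk
    rw [Function.iterate_succ_apply, Function.iterate_succ_apply]
    refine ih (h m) (h n) k (step_dvd hd hh ?_)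
    have he : j + 1 + k = (j + k) + 1 := by omega
    rwa [he] at hk

/-- the number of residues mod `d^k` that avoid `0 mod d` for `k` iterates
(including the 0th) is at most `(d-1)^k`. -/
private lemma countB (hd : 2 ≤ d) (hl : IsCoprime l (d : ℤ))
    (hh : ∀ n : ℤ, (d : ℤ) * h n = l * n + L (n % d)) :
    ∀ k : ℕ, ((Finset.Ico (0 : ℤ) ((d : ℤ) ^ k)).filter
      (fun r => ∀ j < k, ¬ (d : ℤ) ∣ h^[j] r)).card ≤ (d - 1) ^ k := by
  have hd0 : (0 : ℤ) < d := by exact_mod_cast (by omega : 0 < d)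
  intro k
  induction k with
  | zero =>
    refine le_trans (Finset.card_filter_le _ _) ?_
    simp
  | succ k ih =>
    set Bk := (Finset.Ico (0 : ℤ) ((d : ℤ) ^ k)).filter
      (fun r => ∀ j < k, ¬ (d : ℤ) ∣ h^[j] r) with hBk
    have hdk0 : (0 : ℤ) < (d : ℤ) ^ k := pow_pos hd0 k
    have hmain : ((Finset.Ico (0 : ℤ) ((d : ℤ) ^ (k + 1))).filter
        (fun r => ∀ j < k + 1, ¬ (d : ℤ) ∣ h^[j] r)).card
        ≤ ((Finset.Ico (1 : ℤ) (d : ℤ)) ×ˢ Bk).card := by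
      apply Finset.card_le_card_of_injOn (fun r => (r % (d : ℤ), h r % (d : ℤ) ^ k))
      · intro r hr
        simp only [Finset.mem_coe, Finset.mem_filter, Finset.mem_Ico] at hr
        obtain ⟨⟨hr0, hrM⟩, hrP⟩ := hr
        have hrd : ¬ (d : ℤ) ∣ r := by simpa using hrP 0 (by omega)
        have hmem1 : r % (d : ℤ) ∈ Finset.Ico (1 : ℤ) (d : ℤ) := by
          have hmn := Int.emod_nonneg r hd0.ne'
          have hne : r % (d : ℤ) ≠ 0 := fun hc => hrd (Int.dvd_of_emod_eq_zero hc)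
          exact Finset.mem_Ico.mpr ⟨by omega, Int.emod_lt_of_pos r hd0⟩
        have hmem2 : h r % (d : ℤ) ^ k ∈ Bk := by
          rw [hBk, Finset.mem_filter, Finset.mem_Ico]
          refine ⟨⟨Int.emod_nonneg _ hdk0.ne', Int.emod_lt_of_pos _ hdk0⟩, ?_⟩
          intro j hj
          have hsub : (d : ℤ) ^ k ∣ h r - h r % (d : ℤ) ^ k :=
            ⟨h r / (d : ℤ) ^ k, by rw [Int.emod_def]; ring⟩
          have hdj : (d : ℤ) ^ (j + 1) ∣ h r - h r % (d : ℤ) ^ k :=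
            (pow_dvd_pow _ (by omega)).trans hsub
          have hiter := iter_dvd hd hh j (h r) (h r % (d : ℤ) ^ k) 1 hdj
          rw [pow_one] at hiter
          rw [← dvd_iff_of_dvd_sub hiter, ← Function.iterate_succ_apply]
          exact hrP (j + 1) (by omega)
        exact Finset.mem_product.mpr ⟨hmem1, hmem2⟩
      · intro r hr s hs heq
        simp only [Finset.coe_filter, Set.mem_setOf_eq, Finset.mem_Ico] at hr hs
        simp only [Prod.mk.injEq] at heq
        have hlin := lin_key hh heq.1
        have hk : (d : ℤ) ^ k ∣ h r - h s :=
          Int.dvd_of_emod_eq_zero (Int.emod_eq_emod_iff_emod_sub_eq_zero.mp heq.2)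
        have h3 : (d : ℤ) ^ (k + 1) ∣ l * (r - s) := by
          rw [← hlin, pow_succ']
          exact mul_dvd_mul_left _ hk
        have h4 : (d : ℤ) ^ (k + 1) ∣ r - s := (hl.symm.pow_left).dvd_of_dvd_mul_left h3
        have h5 : r % (d : ℤ) ^ (k + 1) = s % (d : ℤ) ^ (k + 1) :=
          Int.emod_eq_emod_iff_emod_sub_eq_zero.mpr (Int.emod_eq_zero_of_dvd h4)
        rwa [Int.emod_eq_of_lt hr.1.1 hr.1.2, Int.emod_eq_of_lt hs.1.1 hs.1.2] at h5
    have hcard : ((Finset.Ico (1 : ℤ) (d : ℤ)) ×ˢ Bk).card = (d - 1) * Bk.card := by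
      rw [Finset.card_product, Int.card_Ico]
      congr 1
      omega
    calc ((Finset.Ico (0 : ℤ) ((d : ℤ) ^ (k + 1))).filter
        (fun r => ∀ j < k + 1, ¬ (d : ℤ) ∣ h^[j] r)).card
        ≤ ((Finset.Ico (1 : ℤ) (d : ℤ)) ×ˢ Bk).card := hmain
      _ = (d - 1) * Bk.card := hcard
      _ ≤ (d - 1) * (d - 1) ^ k := Nat.mul_le_mul le_rfl ih
      _ = (d - 1) ^ (k + 1) := (pow_succ' _ _).symm

/-- the number of residues mod `d^(k+1)` avoiding `0 mod d` for iterates `1..k`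
is at most `d * (d-1)^k`. -/
private lemma countB' (hd : 2 ≤ d) (hl : IsCoprime l (d : ℤ))
    (hh : ∀ n : ℤ, (d : ℤ) * h n = l * n + L (n % d)) (k : ℕ) :
    ((Finset.Ico (0 : ℤ) ((d : ℤ) ^ (k + 1))).filter
      (fun r => ∀ j : ℕ, 1 ≤ j → j ≤ k → ¬ (d : ℤ) ∣ h^[j] r)).card ≤ d * (d - 1) ^ k := by
  have hd0 : (0 : ℤ) < d := by exact_mod_cast (by omega : 0 < d)
  have hdk0 : (0 : ℤ) < (d : ℤ) ^ k := pow_pos hd0 k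
  set Bk := (Finset.Ico (0 : ℤ) ((d : ℤ) ^ k)).filter
    (fun r => ∀ j < k, ¬ (d : ℤ) ∣ h^[j] r) with hBk
  have hmain : ((Finset.Ico (0 : ℤ) ((d : ℤ) ^ (k + 1))).filter
      (fun r => ∀ j : ℕ, 1 ≤ j → j ≤ k → ¬ (d : ℤ) ∣ h^[j] r)).card
      ≤ ((Finset.Ico (0 : ℤ) (d : ℤ)) ×ˢ Bk).card := by
    apply Finset.card_le_card_of_injOn (fun r => (r % (d : ℤ), h r % (d : ℤ) ^ k))
    · intro r hr
      simp only [Finset.mem_coe, Finset.mem_filter, Finset.mem_Ico] at hr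
      obtain ⟨⟨hr0, hrM⟩, hrP⟩ := hr
      have hmem1 : r % (d : ℤ) ∈ Finset.Ico (0 : ℤ) (d : ℤ) :=
        Finset.mem_Ico.mpr ⟨Int.emod_nonneg r hd0.ne', Int.emod_lt_of_pos r hd0⟩
      have hmem2 : h r % (d : ℤ) ^ k ∈ Bk := by
        rw [hBk, Finset.mem_filter, Finset.mem_Ico]
        refine ⟨⟨Int.emod_nonneg _ hdk0.ne', Int.emod_lt_of_pos _ hdk0⟩, ?_⟩
        intro j hj
        have hsub : (d : ℤ) ^ k ∣ h r - h r % (d : ℤ) ^ k :=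
          ⟨h r / (d : ℤ) ^ k, by rw [Int.emod_def]; ring⟩
        have hdj : (d : ℤ) ^ (j + 1) ∣ h r - h r % (d : ℤ) ^ k :=
          (pow_dvd_pow _ (by omega)).trans hsub
        have hiter := iter_dvd hd hh j (h r) (h r % (d : ℤ) ^ k) 1 hdj
        rw [pow_one] at hiter
        rw [← dvd_iff_of_dvd_sub hiter, ← Function.iterate_succ_apply]
        exact hrP (j + 1) (by omega) (by omega)
      exact Finset.mem_product.mpr ⟨hmem1, hmem2⟩
    · intro r hr s hs heq
      simp only [Finset.coe_filter, Set.mem_setOf_eq, Finset.mem_Ico] at hr hs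
      simp only [Prod.mk.injEq] at heq
      have hlin := lin_key hh heq.1
      have hk : (d : ℤ) ^ k ∣ h r - h s :=
        Int.dvd_of_emod_eq_zero (Int.emod_eq_emod_iff_emod_sub_eq_zero.mp heq.2)
      have h3 : (d : ℤ) ^ (k + 1) ∣ l * (r - s) := by
        rw [← hlin, pow_succ']
        exact mul_dvd_mul_left _ hk
      have h4 : (d : ℤ) ^ (k + 1) ∣ r - s := (hl.symm.pow_left).dvd_of_dvd_mul_left h3
      have h5 : r % (d : ℤ) ^ (k + 1) = s % (d : ℤ) ^ (k + 1) :=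
        Int.emod_eq_emod_iff_emod_sub_eq_zero.mpr (Int.emod_eq_zero_of_dvd h4)
      rwa [Int.emod_eq_of_lt hr.1.1 hr.1.2, Int.emod_eq_of_lt hs.1.1 hs.1.2] at h5
  have hcard : ((Finset.Ico (0 : ℤ) (d : ℤ)) ×ˢ Bk).card = d * Bk.card := by
    simp [Finset.card_product, Int.card_Ico]
  calc ((Finset.Ico (0 : ℤ) ((d : ℤ) ^ (k + 1))).filter
      (fun r => ∀ j : ℕ, 1 ≤ j → j ≤ k → ¬ (d : ℤ) ∣ h^[j] r)).card
      ≤ ((Finset.Ico (0 : ℤ) (d : ℤ)) ×ˢ Bk).card := hmain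
    _ = d * Bk.card := hcard
    _ ≤ d * (d - 1) ^ k := Nat.mul_le_mul le_rfl (countB hd hl hh k)

end Aux

/-- Theorem 5.2 part (2): with `h` periodically linear of the form
`h n = (l n + l_b)/d` for `n ≡ b (mod d)`, `gcd(l,d)=1`, the number `N*(x)` of
integers `|n| ≤ x` such that `h^(k)(n) ≢ 0 (mod d)` for all `1 ≤ k ≤ log_d x`
satisfies `N*(x) ≤ 4 d x^(β_d)` for all `x ≥ 1`, where `β_d = log(d-1)/log d`. -/
theorem periodically_linear_exceptional_bound
    (d : ℕ) (hd : 2 ≤ d) (l : ℤ) (hl : IsCoprime l (d : ℤ))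
    (L : ℤ → ℤ) (hL : ∀ b : ℤ, 0 ≤ b → b < d → (d : ℤ) ∣ L b + l * b)
    (h : ℤ → ℤ) (hh : ∀ n : ℤ, (d : ℤ) * h n = l * n + L (n % d))
    (x : ℝ) (hx : 1 ≤ x) :
    (Set.ncard {n : ℤ | |(n : ℝ)| ≤ x ∧
        ∀ k : ℕ, 1 ≤ k → (k : ℝ) ≤ Real.log x / Real.log d → ¬ (d : ℤ) ∣ h^[k] n} : ℝ)
      ≤ 4 * d * x ^ (Real.log ((d : ℝ) - 1) / Real.log d) := by
  have hd0 : (0 : ℤ) < d := by exact_mod_cast (by omega : 0 < d)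
  have hdR : (2 : ℝ) ≤ (d : ℝ) := by exact_mod_cast hd
  have hx0 : (0 : ℝ) < x := by linarith
  set β : ℝ := Real.log ((d : ℝ) - 1) / Real.log d with hβ
  set K : ℕ := ⌊Real.log x / Real.log (d : ℝ)⌋₊ with hK
  set M : ℤ := (d : ℤ) ^ (K + 1) with hM
  have hMpos : (0 : ℤ) < M := pow_pos hd0 _
  have hlogd : 0 < Real.log d := Real.log_pos (by linarith)
  have hlogx : 0 ≤ Real.log x := Real.log_nonneg hx
  have hq0 : 0 ≤ Real.log x / Real.log d := div_nonneg hlogx hlogd.le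
  have hβ0 : 0 ≤ β := div_nonneg (Real.log_nonneg (by linarith)) hlogd.le
  -- d^K ≤ x
  have hdKx : ((d : ℝ)) ^ K ≤ x := by
    have h1 : (K : ℝ) ≤ Real.log x / Real.log d := Nat.floor_le hq0
    have h2 : (K : ℝ) * Real.log d ≤ Real.log x := by
      rw [← le_div_iff₀ hlogd]; exact h1
    calc ((d : ℝ)) ^ K = Real.exp ((K : ℝ) * Real.log d) := by
          rw [Real.exp_nat_mul, Real.exp_log (by linarith)]
      _ ≤ Real.exp (Real.log x) := Real.exp_le_exp.mpr h2
      _ = x := Real.exp_log hx0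
  -- x < d^(K+1)
  have hxM : x < ((d : ℝ)) ^ (K + 1) := by
    have h1 : Real.log x / Real.log d < (K : ℝ) + 1 := Nat.lt_floor_add_one _
    have h2 : Real.log x < ((K : ℝ) + 1) * Real.log d := by
      rw [div_lt_iff₀ hlogd] at h1; exact h1
    calc x = Real.exp (Real.log x) := (Real.exp_log hx0).symm
      _ < Real.exp (((K : ℝ) + 1) * Real.log d) := Real.exp_lt_exp.mpr h2
      _ = ((d : ℝ)) ^ (K + 1) := by
          rw [show ((K : ℝ) + 1) = ((K + 1 : ℕ) : ℝ) by push_cast; ring,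
            Real.exp_nat_mul, Real.exp_log (by linarith : (0:ℝ) < (d:ℝ))]
  classical
  set S : Set ℤ := {n : ℤ | |(n : ℝ)| ≤ x ∧
      ∀ k : ℕ, 1 ≤ k → (k : ℝ) ≤ Real.log x / Real.log d → ¬ (d : ℤ) ∣ h^[k] n} with hS
  set B' : Finset ℤ := (Finset.Ico (0 : ℤ) ((d : ℤ) ^ (K + 1))).filter
    (fun r => ∀ j : ℕ, 1 ≤ j → j ≤ K → ¬ (d : ℤ) ∣ h^[j] r) with hB'
  set f : ℤ → ℤ × ℤ := fun n => (n % M, if 0 ≤ n then 0 else 1) with hf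
  set T : Finset (ℤ × ℤ) := B' ×ˢ ({0, 1} : Finset ℤ) with hT
  -- members of S are bounded by M in absolute value
  have habs : ∀ n ∈ S, |n| < M := by
    intro n hn
    have h1 : |(n : ℝ)| ≤ x := hn.1
    have h2 : ((|n| : ℤ) : ℝ) < (M : ℝ) := by
      rw [Int.cast_abs]
      calc |(n : ℝ)| ≤ x := h1
        _ < ((d : ℝ)) ^ (K + 1) := hxM
        _ = (M : ℝ) := by rw [hM]; push_cast; ring
    exact_mod_cast h2
  -- image of S lands in T
  have him : f '' S ⊆ (T : Set (ℤ × ℤ)) := by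
    rintro _ ⟨n, hn, rfl⟩
    have hn2 := hn.2
    simp only [hT, Finset.coe_product, Set.mem_prod, Finset.mem_coe]
    constructor
    · rw [hB', Finset.mem_filter, Finset.mem_Ico]
      refine ⟨⟨Int.emod_nonneg n hMpos.ne', by rw [← hM]; exact Int.emod_lt_of_pos n hMpos⟩, ?_⟩
      intro j hj1 hjK
      have hnd : ¬ (d : ℤ) ∣ h^[j] n := by
        refine hn2 j hj1 ?_
        exact (Nat.le_floor_iff hq0).mp hjK
      have hsub : M ∣ n - n % M := ⟨n / M, by rw [Int.emod_def]; ring⟩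
      have hdj : (d : ℤ) ^ (j + 1) ∣ n - n % M := by
        refine dvd_trans ?_ hsub
        rw [hM]
        exact pow_dvd_pow _ (by omega)
      have hiter := iter_dvd hd hh j n (n % M) 1 hdj
      rw [pow_one] at hiter
      rw [← dvd_iff_of_dvd_sub hiter]
      exact hnd
    · by_cases h0 : 0 ≤ n <;> simp [h0, hf]
  -- f injective on S
  have hinj : Set.InjOn f S := by
    intro n hn m hm heq
    simp only [hf, Prod.mk.injEq] at heq
    have hnM := abs_lt.mp (habs n hn)
    have hmM := abs_lt.mp (habs m hm)
    by_cases h0n : 0 ≤ n <;> by_cases h0m : 0 ≤ m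
    · have e1 : n % M = n := Int.emod_eq_of_lt h0n (by omega)
      have e2 : m % M = m := Int.emod_eq_of_lt h0m (by omega)
      rw [e1, e2] at heq
      exact heq.1
    · exfalso; rw [if_pos h0n, if_neg h0m] at heq; exact one_ne_zero heq.2.symm
    · exfalso; rw [if_neg h0n, if_pos h0m] at heq; exact one_ne_zero heq.2
    · have e1 : n % M = n + M := by
        rw [show n % M = (n + M * 1) % M from (Int.add_mul_emod_self_left n M 1).symm,
          show n + M * 1 = n + M by ring]
        exact Int.emod_eq_of_lt (by omega) (by omega)
      have e2 : m % M = m + M := by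
        rw [show m % M = (m + M * 1) % M from (Int.add_mul_emod_self_left m M 1).symm,
          show m + M * 1 = m + M by ring]
        exact Int.emod_eq_of_lt (by omega) (by omega)
      rw [e1, e2] at heq
      omega
  -- counting
  have hTcard : T.card = B'.card * 2 := by
    simp [hT, Finset.card_product]
  have hScard : S.ncard ≤ B'.card * 2 := by
    calc S.ncard = (f '' S).ncard := (Set.ncard_image_of_injOn hinj).symm
      _ ≤ (T : Set (ℤ × ℤ)).ncard := Set.ncard_le_ncard him T.finite_toSet
      _ = T.card := Set.ncard_coe_finset T
      _ = B'.card * 2 := hTcard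
  have hB'card : B'.card ≤ d * (d - 1) ^ K := countB' hd hl hh K
  -- the real estimate
  have hd1R : (1 : ℝ) ≤ (d : ℝ) - 1 := by linarith
  have hrw : (d : ℝ) - 1 = (d : ℝ) ^ β := by
    rw [Real.rpow_def_of_pos (by linarith : (0:ℝ) < (d:ℝ)), hβ, mul_comm,
      div_mul_cancel₀ _ hlogd.ne']
    exact (Real.exp_log (by linarith)).symm
  have hpow : ((d : ℝ) - 1) ^ K ≤ x ^ β := by
    have heK : ((d : ℝ) - 1) ^ K = ((d : ℝ) ^ (K : ℕ) : ℝ) ^ β := by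
      rw [hrw, ← Real.rpow_natCast ((d : ℝ) ^ β) K, ← Real.rpow_mul (by linarith),
        mul_comm, Real.rpow_mul (by linarith), Real.rpow_natCast]
    rw [heK]
    exact Real.rpow_le_rpow (by positivity) hdKx hβ0
  have hxβ0 : (0 : ℝ) ≤ x ^ β := Real.rpow_le_rpow (le_refl 0) hx0.le hβ0 |>.trans' (by positivity)
  calc (S.ncard : ℝ) ≤ ((B'.card * 2 : ℕ) : ℝ) := by exact_mod_cast hScard
    _ ≤ ((d * (d - 1) ^ K * 2 : ℕ) : ℝ) := by exact_mod_cast Nat.mul_le_mul_right 2 hB'card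
    _ = 2 * (d : ℝ) * ((d : ℝ) - 1) ^ K := by
        push_cast [Nat.cast_sub (by omega : 1 ≤ d)]
        ring
    _ ≤ 2 * (d : ℝ) * (x ^ β) := by
        apply mul_le_mul_of_nonneg_left hpow (by positivity)
    _ ≤ 4 * (d : ℝ) * x ^ β := by nlinarith [Real.rpow_nonneg hx0.le β]
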